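/- Let G be a simple graph on n ≥ 1 vertices with m edges, and define E_1,…,E_m and M_ℓ as follows: E_k = (1/2)E_{i_k j_k} + (1/2)E_{j_k i_k} for the k-th edge {i_k,j_k}, and M_ℓ := max_{‖u‖₂ = 1} { Σ_{i=1}^{ℓ} (u^T (ℓ^{−1} I) u)² + 2 Σ_{k=1}^{m} (u^T E_k u)² }. Then M_ℓ = max_{‖u‖₂ = ‖v‖₂ = 1} { Σ_{i=1}^{ℓ} (u^T (ℓ^{−1} I) v)² + 2 Σ_{k=1}^{m} (u^T E_k v)² }, i.e. the maximum of the bilinear sum-of-squares over pairs of unit vectors u, v ∈ ℝ^n equals the maximum of the corresponding quadratic sum-of-squares over a single unit vector. -/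

import Mathlib

open Matrix

/-- Bilinearity of `u ⬝ᵥ X *ᵥ v` in the matrix argument, for sums of scalar
multiples. -/
lemma stmt7_bil_sum {n : ℕ} {ι : Type*} [Fintype ι] (c : ι → ℝ)
    (A : ι → Matrix (Fin n) (Fin n) ℝ) (u v : Fin n → ℝ) :
    u ⬝ᵥ (∑ i, c i • A i).mulVec v = ∑ i, c i * (u ⬝ᵥ (A i).mulVec v) := by
  let L : Matrix (Fin n) (Fin n) ℝ →ₗ[ℝ] ℝ :=
    { toFun := fun X => u ⬝ᵥ X.mulVec v
      map_add' := by
        intro X Y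
        simp only [Matrix.add_mulVec, dotProduct_add]
      map_smul' := by
        intro r X
        simp only [Matrix.smul_mulVec, dotProduct_smul, smul_eq_mul, RingHom.id_apply] }
  have h1 := map_sum L (fun i => c i • A i) Finset.univ
  have h2 : ∀ i, L (c i • A i) = c i * L (A i) := by
    intro i; rw [_root_.map_smul]; rfl
  simp only [h2] at h1
  exact h1

/-- For a symmetric matrix the bilinear form is symmetric. -/
lemma stmt7_bil_symm {n : ℕ} (C : Matrix (Fin n) (Fin n) ℝ) (h : Cᵀ = C) (u v : Fin n → ℝ) :
    u ⬝ᵥ C.mulVec v = v ⬝ᵥ C.mulVec u := by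
  conv_lhs => rw [← h]
  rw [Matrix.dotProduct_mulVec, Matrix.vecMul_transpose, dotProduct_comm]

lemma stmt7_cont_bil {n : ℕ} (A : Matrix (Fin n) (Fin n) ℝ) :
    Continuous (fun u : Fin n → ℝ => u ⬝ᵥ A.mulVec u) := by
  simp only [dotProduct, mulVec]; fun_prop

/-- The Euclidean unit sphere in `Fin n → ℝ` is compact. -/
lemma stmt7_sphere_compact (n : ℕ) : IsCompact {u : Fin n → ℝ | (∑ i, u i ^ 2) = 1} := by
  apply IsCompact.of_isClosed_subset (isCompact_closedBall (0 : Fin n → ℝ) 1)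
  · exact isClosed_eq (by fun_prop) continuous_const
  · intro u hu
    simp only [Metric.mem_closedBall, dist_zero_right]
    rw [pi_norm_le_iff_of_nonneg zero_le_one]
    intro i
    have h1 : u i ^ 2 ≤ 1 := by
      calc u i ^ 2 ≤ ∑ j, u j ^ 2 :=
            Finset.single_le_sum (fun j _ => sq_nonneg (u j)) (Finset.mem_univ i)
        _ = 1 := hu
    rw [Real.norm_eq_abs, abs_le]
    constructor <;> nlinarith

/-- Key inequality: for a family of symmetric matrices, the bilinear
sum-of-squares over a pair of unit vectors is bounded by any bound for the
quadratic sum-of-squares over single unit vectors. -/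
lemma stmt7_key {n : ℕ} {ι : Type*} [Fintype ι] (A : ι → Matrix (Fin n) (Fin n) ℝ)
    (hA : ∀ i, (A i)ᵀ = A i) (M : ℝ)
    (hM : ∀ w : Fin n → ℝ, (∑ i, w i ^ 2) = 1 → (∑ i, (w ⬝ᵥ (A i).mulVec w) ^ 2) ≤ M)
    (u v : Fin n → ℝ) (hu : (∑ i, u i ^ 2) = 1) (hv : (∑ i, v i ^ 2) = 1) :
    (∑ i, (u ⬝ᵥ (A i).mulVec v) ^ 2) ≤ M := by
  set z : ι → ℝ := fun i => u ⬝ᵥ (A i).mulVec v with hz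
  set S : ℝ := ∑ i, z i ^ 2 with hS
  have hS0 : 0 ≤ S := Finset.sum_nonneg fun i _ => sq_nonneg _
  have hM0 : 0 ≤ M :=
    le_trans (Finset.sum_nonneg fun i _ => sq_nonneg _) (hM u hu)
  set C : Matrix (Fin n) (Fin n) ℝ := ∑ i, z i • A i with hC
  have hCsym : Cᵀ = C := by
    rw [hC, Matrix.transpose_sum]
    exact Finset.sum_congr rfl fun i _ => by rw [Matrix.transpose_smul, hA]
  have hSC : u ⬝ᵥ C.mulVec v = S := by
    rw [hC, stmt7_bil_sum, hS]
    exact Finset.sum_congr rfl fun i _ => (sq (z i)).symm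
  -- maximum of |w^T C w| on the sphere
  obtain ⟨w₀, hw₀mem, hw₀max⟩ :=
    (stmt7_sphere_compact n).exists_isMaxOn ⟨u, hu⟩ ((stmt7_cont_bil C).abs.continuousOn)
  set h := |w₀ ⬝ᵥ C.mulVec w₀| with hh
  have hhnn : 0 ≤ h := abs_nonneg _
  -- quadratic bound for arbitrary vectors
  have hquad : ∀ w : Fin n → ℝ, |w ⬝ᵥ C.mulVec w| ≤ h * (∑ i, w i ^ 2) := by
    intro w
    set s : ℝ := ∑ i, w i ^ 2 with hs
    have hs0 : 0 ≤ s := Finset.sum_nonneg fun i _ => sq_nonneg _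
    rcases eq_or_lt_of_le hs0 with h0 | hpos
    · have hw : w = 0 := by
        funext i
        have h4 := (Finset.sum_eq_zero_iff_of_nonneg
          (fun j _ => sq_nonneg (w j))).1 h0.symm i (Finset.mem_univ i)
        simp only [Pi.zero_apply]
        exact (pow_eq_zero_iff two_ne_zero).1 h4
      rw [hw]
      simp [← h0]
    · set c : ℝ := (Real.sqrt s)⁻¹ with hc
      have hsqrt : 0 < Real.sqrt s := Real.sqrt_pos.2 hpos
      have hc2 : c ^ 2 = s⁻¹ := by
        rw [hc, ← Real.sqrt_inv, Real.sq_sqrt (inv_nonneg.2 hs0)]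
      have hmem : (∑ i, (c • w) i ^ 2) = 1 := by
        simp only [Pi.smul_apply, smul_eq_mul, mul_pow]
        rw [← Finset.mul_sum, ← hs, hc2]
        field_simp
      have hbil : (c • w) ⬝ᵥ C.mulVec (c • w) = c ^ 2 * (w ⬝ᵥ C.mulVec w) := by
        rw [smul_dotProduct, Matrix.mulVec_smul, dotProduct_smul]
        simp [sq, mul_assoc]
      have := hw₀max hmem
      simp only [Set.mem_setOf_eq, hbil] at this
      rw [abs_mul, abs_of_nonneg (by positivity : (0:ℝ) ≤ c ^ 2)] at this
      have hcs : c ^ 2 * s = 1 := by rw [hc2]; field_simp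
      calc |w ⬝ᵥ C.mulVec w| = (c ^ 2 * s) * |w ⬝ᵥ C.mulVec w| := by rw [hcs]; ring
        _ = s * (c ^ 2 * |w ⬝ᵥ C.mulVec w|) := by ring
        _ ≤ s * h := by
            apply mul_le_mul_of_nonneg_left _ hs0
            exact this
        _ = h * s := mul_comm _ _
  -- polarization : S ≤ h
  have hpol : S ≤ h := by
    have e1 : (u + v) ⬝ᵥ C.mulVec (u + v) - (u - v) ⬝ᵥ C.mulVec (u - v) = 4 * S := by
      have hvu : v ⬝ᵥ C.mulVec u = S := by rw [stmt7_bil_symm C hCsym v u, hSC]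
      simp only [Matrix.mulVec_add, Matrix.mulVec_sub, dotProduct_add, dotProduct_sub,
        add_dotProduct, sub_dotProduct]
      rw [hSC, hvu]; ring
    have e2 : (∑ i, (u + v) i ^ 2) + (∑ i, (u - v) i ^ 2) = 4 := by
      have : ∀ i ∈ Finset.univ, ((u + v) i ^ 2) + ((u - v) i ^ 2)
          = 2 * u i ^ 2 + 2 * v i ^ 2 := by
        intro i _; simp only [Pi.add_apply, Pi.sub_apply]; ring
      rw [← Finset.sum_add_distrib, Finset.sum_congr rfl this,
        Finset.sum_add_distrib, ← Finset.mul_sum, ← Finset.mul_sum, hu, hv]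
      ring
    have b1 := hquad (u + v)
    have b2 := hquad (u - v)
    have : 4 * S ≤ h * 4 := by
      calc 4 * S = (u + v) ⬝ᵥ C.mulVec (u + v) - (u - v) ⬝ᵥ C.mulVec (u - v) := e1.symm
        _ ≤ |(u + v) ⬝ᵥ C.mulVec (u + v)| + |(u - v) ⬝ᵥ C.mulVec (u - v)| := by
            have := abs_nonneg ((u - v) ⬝ᵥ C.mulVec (u - v))
            have := le_abs_self ((u + v) ⬝ᵥ C.mulVec (u + v))
            have := neg_abs_le ((u - v) ⬝ᵥ C.mulVec (u - v))
            linarith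
        _ ≤ h * (∑ i, (u + v) i ^ 2) + h * (∑ i, (u - v) i ^ 2) := add_le_add b1 b2
        _ = h * 4 := by rw [← mul_add, e2]
    linarith
  -- Cauchy-Schwarz : h^2 ≤ S * M
  have hCS : h ^ 2 ≤ S * M := by
    have e3 : w₀ ⬝ᵥ C.mulVec w₀ = ∑ i, z i * (w₀ ⬝ᵥ (A i).mulVec w₀) := by
      rw [hC, stmt7_bil_sum]
    have cs := Finset.sum_mul_sq_le_sq_mul_sq Finset.univ z
      (fun i => w₀ ⬝ᵥ (A i).mulVec w₀)
    have hMq : (∑ i, (w₀ ⬝ᵥ (A i).mulVec w₀) ^ 2) ≤ M := hM w₀ hw₀mem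
    have : h ^ 2 = (∑ i, z i * (w₀ ⬝ᵥ (A i).mulVec w₀)) ^ 2 := by
      rw [hh, sq_abs, e3]
    rw [this]
    calc (∑ i, z i * (w₀ ⬝ᵥ (A i).mulVec w₀)) ^ 2
        ≤ (∑ i, z i ^ 2) * ∑ i, (w₀ ⬝ᵥ (A i).mulVec w₀) ^ 2 := cs
      _ ≤ S * M := mul_le_mul (le_of_eq hS.symm) hMq
          (Finset.sum_nonneg fun i _ => sq_nonneg _) hS0
  nlinarith [hpol, hCS, hS0, hM0]

lemma stmt7_std_t {n : ℕ} (p q : Fin n) :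
    (Matrix.single p q (1:ℝ))ᵀ = Matrix.single q p 1 := by
  ext i j
  simp only [Matrix.transpose_apply, Matrix.single, Matrix.of_apply]
  exact if_congr and_comm rfl rfl

/-- the maximum of the quadratic sum-of-squares over a single unit
vector equals the maximum of the corresponding bilinear sum-of-squares over pairs
of unit vectors (both maxima are attained and agree). -/
theorem stmt_7 (n m : ℕ) (hn : 1 ≤ n) (G : SimpleGraph (Fin n)) [DecidableRel G.Adj]
    (a b : Fin m → Fin n)
    (hab : ∀ k, G.Adj (a k) (b k))
    (hinj : Function.Injective fun k => s(a k, b k))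
    (hsurj : ∀ e ∈ G.edgeFinset, ∃ k, s(a k, b k) = e)
    (E : Fin m → Matrix (Fin n) (Fin n) ℝ)
    (hE : ∀ k, E k = (1/2 : ℝ) • Matrix.single (a k) (b k) 1
                   + (1/2 : ℝ) • Matrix.single (b k) (a k) 1)
    (ℓ : ℕ) (hℓ : 0 < ℓ) :
    ∃ M : ℝ,
      IsGreatest
        {y : ℝ | ∃ u : Fin n → ℝ, (∑ i, u i ^ 2) = 1 ∧
          y = (∑ _i : Fin ℓ,
                (u ⬝ᵥ ((ℓ : ℝ)⁻¹ • (1 : Matrix (Fin n) (Fin n) ℝ)).mulVec u) ^ 2)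
            + 2 * ∑ k, (u ⬝ᵥ (E k).mulVec u) ^ 2} M ∧
      IsGreatest
        {y : ℝ | ∃ u v : Fin n → ℝ, (∑ i, u i ^ 2) = 1 ∧ (∑ i, v i ^ 2) = 1 ∧
          y = (∑ _i : Fin ℓ,
                (u ⬝ᵥ ((ℓ : ℝ)⁻¹ • (1 : Matrix (Fin n) (Fin n) ℝ)).mulVec v) ^ 2)
            + 2 * ∑ k, (u ⬝ᵥ (E k).mulVec v) ^ 2} M := by
  classical
  -- the family of symmetric matrices
  set A : (Fin ℓ ⊕ Fin m) → Matrix (Fin n) (Fin n) ℝ :=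
    Sum.elim (fun _ => (ℓ : ℝ)⁻¹ • (1 : Matrix (Fin n) (Fin n) ℝ))
      (fun k => Real.sqrt 2 • E k) with hA'
  have hA : ∀ i, (A i)ᵀ = A i := by
    rintro (i | k)
    · simp [hA']
    · simp only [hA', Sum.elim_inr, Matrix.transpose_smul, hE, Matrix.transpose_add,
        stmt7_std_t]
      rw [add_comm]
  -- rewriting the objective
  have hobj : ∀ u v : Fin n → ℝ,
      (∑ _i : Fin ℓ, (u ⬝ᵥ ((ℓ : ℝ)⁻¹ • (1 : Matrix (Fin n) (Fin n) ℝ)).mulVec v) ^ 2)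
        + 2 * ∑ k, (u ⬝ᵥ (E k).mulVec v) ^ 2
      = ∑ i : Fin ℓ ⊕ Fin m, (u ⬝ᵥ (A i).mulVec v) ^ 2 := by
    intro u v
    rw [Fintype.sum_sum_type]
    simp only [hA', Sum.elim_inl, Sum.elim_inr, Matrix.smul_mulVec, dotProduct_smul,
      smul_eq_mul, mul_pow, Real.sq_sqrt (by norm_num : (0:ℝ) ≤ 2)]
    rw [Finset.mul_sum]
  set F : (Fin n → ℝ) → ℝ := fun u => ∑ i : Fin ℓ ⊕ Fin m, (u ⬝ᵥ (A i).mulVec u) ^ 2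
    with hF
  -- the sphere is nonempty
  have hne : ({u : Fin n → ℝ | (∑ i, u i ^ 2) = 1}).Nonempty := by
    refine ⟨fun i => if i = ⟨0, hn⟩ then 1 else 0, ?_⟩
    simp [Finset.sum_ite_eq', sq]
  -- maximize F on the sphere
  have hFc : Continuous F := by
    apply continuous_finset_sum
    intro i _
    exact (stmt7_cont_bil (A i)).pow 2
  obtain ⟨u₁, hu₁mem, hu₁max⟩ :=
    (stmt7_sphere_compact n).exists_isMaxOn hne hFc.continuousOn
  refine ⟨F u₁, ⟨⟨u₁, hu₁mem, (hobj u₁ u₁).symm⟩, ?_⟩, ⟨u₁, u₁, hu₁mem, hu₁mem,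
    (hobj u₁ u₁).symm⟩, ?_⟩
  · rintro y ⟨u, hu, hy⟩
    rw [hy, hobj]
    exact hu₁max hu
  · rintro y ⟨u, v, hu, hv, hy⟩
    rw [hy, hobj]
    exact stmt7_key A hA (F u₁) (fun w hw => hu₁max hw) u v hu hv
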